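/- arXiv:2602.00781 — 9 statements merged into one kernel-verified Lean document; each statement's English description precedes it below -/
import Mathlib

section
/- Consider a two-state finite-horizon MDP under the stochastic dominance assumption. Then the one-step greedy value function coincides with the optimal value function: V^g_h(s) = V*_h(s) for every 0 ≤ h ≤ T+1 and every s ∈ {0,1}. -/
/-- In a two-state finite-horizon MDP under the stochastic dominance
assumption, the one-step greedy value function coincides with the optimal value
function: `V^g_h(s) = V*_h(s)` for every `0 ≤ h ≤ T+1` and every `s ∈ {0,1}`. -/
theorem greedy_eq_optimal_two_state
    {A : Type} [Fintype A] [Nonempty A]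
    (p : A → Fin 2 → Fin 2 → ℝ) (R : Fin 2 → A → ℝ)
    (hp_nonneg : ∀ a s s', 0 ≤ p a s s')
    (hp_sum : ∀ a s, ∑ s', p a s s' = 1)
    (T : ℕ)
    (Vstar : ℕ → Fin 2 → ℝ) (Qstar : ℕ → Fin 2 → A → ℝ) (Vg : ℕ → Fin 2 → ℝ)
    (astar : Fin 2 → A)
    -- `a*_s` is a one-step greedy action: a maximizer of `R(s,·)`
    (hastar : ∀ s a, R s a ≤ R s (astar s))
    -- optimal value functions, by backward recursion
    (hVstar_top : ∀ s, Vstar (T + 1) s = 0)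
    (hQstar : ∀ h ≤ T, ∀ s a, Qstar h s a = R s a + ∑ s', p a s s' * Vstar (h + 1) s')
    (hVstar : ∀ h ≤ T, ∀ s,
      Vstar h s = Finset.univ.sup' Finset.univ_nonempty (fun a => Qstar h s a))
    -- greedy value function, by backward recursion
    (hVg_top : ∀ s, Vg (T + 1) s = 0)
    (hVg : ∀ h ≤ T, ∀ s,
      Vg h s = R s (astar s) + ∑ s', p (astar s) s s' * Vg (h + 1) s')
    -- stochastic dominance assumption
    (hdom_reward : Finset.univ.sup' Finset.univ_nonempty (fun a => R 0 a)
      ≤ Finset.univ.sup' Finset.univ_nonempty (fun a => R 1 a))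
    (hdom_trans : ∀ s a, p a s 1 ≤ p (astar s) s 1) :
    ∀ h ≤ T + 1, ∀ s, Vg h s = Vstar h s := by

  classical
  have hsupR : ∀ s, Finset.univ.sup' Finset.univ_nonempty (fun a => R s a) = R s (astar s) := by
    intro s
    apply le_antisymm
    · exact Finset.sup'_le _ _ fun a _ => hastar s a
    · exact Finset.le_sup' _ (Finset.mem_univ _)
  have hd0 : 0 ≤ R 1 (astar 1) - R 0 (astar 0) := by
    rw [hsupR 0, hsupR 1] at hdom_reward; linarith
  have hq1 : ∀ a s, p a s 1 ≤ 1 := by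
    intro a s
    have h := hp_sum a s
    rw [Fin.sum_univ_two] at h
    nlinarith [hp_nonneg a s 0]
  have hsum : ∀ a s (V : Fin 2 → ℝ), ∑ s', p a s s' * V s' = V 0 + p a s 1 * (V 1 - V 0) := by
    intro a s V
    have h := hp_sum a s
    rw [Fin.sum_univ_two] at h ⊢
    have h0 : p a s 0 = 1 - p a s 1 := by linarith
    rw [h0]; ring
  -- downward induction: Δ_h := Vg h 1 - Vg h 0 satisfies 0 ≤ Δ_h and (1 - q1) Δ_h ≤ d
  have key : ∀ k, k ≤ T + 1 →
      0 ≤ Vg (T + 1 - k) 1 - Vg (T + 1 - k) 0 ∧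
      (1 - p (astar 1) 1 1) * (Vg (T + 1 - k) 1 - Vg (T + 1 - k) 0) ≤
        R 1 (astar 1) - R 0 (astar 0) := by
    intro k
    induction k with
    | zero =>
      intro _
      simp only [Nat.sub_zero, hVg_top]
      constructor <;> simp [hd0]
    | succ n ih =>
      intro hn
      obtain ⟨h1, h2⟩ := ih (by omega)
      have hh : T + 1 - (n + 1) ≤ T := by omega
      have hstep : T + 1 - (n + 1) + 1 = T + 1 - n := by omega
      have e0 := hVg (T + 1 - (n + 1)) hh 0
      have e1 := hVg (T + 1 - (n + 1)) hh 1
      rw [hsum, hstep] at e0 e1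
      have q1a := hq1 (astar 1) 1
      have q1b := hp_nonneg (astar 1) 1 1
      have q0a := hq1 (astar 0) 0
      have q0b := hp_nonneg (astar 0) 0 1
      constructor
      · rw [e0, e1]
        nlinarith [mul_nonneg (by linarith : (0:ℝ) ≤ 1 - p (astar 0) 0 1) h1]
      · rw [e0, e1]
        nlinarith [mul_nonneg q1b (by linarith : (0:ℝ) ≤ R 1 (astar 1) - R 0 (astar 0)
            - (1 - p (astar 1) 1 1) * (Vg (T + 1 - n) 1 - Vg (T + 1 - n) 0)),
          mul_nonneg (mul_nonneg (by linarith : (0:ℝ) ≤ 1 - p (astar 1) 1 1) q0b) h1]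
  -- main downward induction: Vg = Vstar
  have main : ∀ k, k ≤ T + 1 → ∀ s, Vg (T + 1 - k) s = Vstar (T + 1 - k) s := by
    intro k
    induction k with
    | zero =>
      intro _ s
      simp [hVg_top, hVstar_top]
    | succ n ih =>
      intro hn s
      have ihn := ih (by omega)
      have hΔ := (key n (by omega)).1
      have hh : T + 1 - (n + 1) ≤ T := by omega
      have hstep : T + 1 - (n + 1) + 1 = T + 1 - n := by omega
      -- Qstar in terms of Vg at next step
      have hQ : ∀ a, Qstar (T + 1 - (n + 1)) s a
          = R s a + Vg (T + 1 - n) 0 + p a s 1 * (Vg (T + 1 - n) 1 - Vg (T + 1 - n) 0) := by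
        intro a
        rw [hQstar _ hh s a, hsum, hstep, ihn 0, ihn 1]
        ring
      have hle : ∀ a, Qstar (T + 1 - (n + 1)) s a ≤ Qstar (T + 1 - (n + 1)) s (astar s) := by
        intro a
        rw [hQ a, hQ (astar s)]
        have := mul_le_mul_of_nonneg_right (hdom_trans s a) hΔ
        have := hastar s a
        linarith
      have hVs : Vstar (T + 1 - (n + 1)) s = Qstar (T + 1 - (n + 1)) s (astar s) := by
        rw [hVstar _ hh s]
        apply le_antisymm
        · exact Finset.sup'_le _ _ fun a _ => hle a
        · exact Finset.le_sup' _ (Finset.mem_univ _)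
      rw [hVs, hQ (astar s), hVg _ hh s, hsum, hstep]
      ring
  intro h hle s
  have : h = T + 1 - (T + 1 - h) := by omega
  rw [this]
  exact main (T + 1 - h) (by omega) s
end

section
/- Consider a two-state finite-horizon MDP under the stochastic dominance assumption, and assume in addition that for every 0 ≤ h ≤ T and every s ∈ {0,1} the maximizer of a ↦ Q*_h(s,a) over A is unique. Then for every K ≥ 1, every s ∈ {0,1}, the greedy action a*_s is the unique maximizer of a ↦ r^K(s,a); consequently, for every K ≥ 1 the K-step lookahead greedy value function equals the optimal value function: V^{K,g}_h(s) = V*_h(s) for all 0 ≤ h ≤ T+1 and all s. -/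
/-- In a two-state finite-horizon MDP under the stochastic dominance
assumption, if moreover for every `0 ≤ h ≤ T` and `s ∈ {0,1}` the maximizer of
`a ↦ Q*_h(s,a)` is unique, then for every `K ≥ 1` and every `s`, the greedy action
`a*_s` is the unique maximizer of `a ↦ r^K(s,a)`; consequently, for every `K ≥ 1`
the K-step lookahead greedy value function equals the optimal value function. -/
theorem k_step_greedy_optimal_two_state
    {A : Type} [Fintype A] [Nonempty A]
    (p : A → Fin 2 → Fin 2 → ℝ) (R : Fin 2 → A → ℝ)
    (hp_nonneg : ∀ a s s', 0 ≤ p a s s')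
    (hp_sum : ∀ a s, ∑ s', p a s s' = 1)
    (T : ℕ)
    (Vstar : ℕ → Fin 2 → ℝ) (Qstar : ℕ → Fin 2 → A → ℝ) (r : ℕ → Fin 2 → A → ℝ)
    (astar : Fin 2 → A)
    -- `a*_s` is a one-step greedy action: a maximizer of `R(s,·)`
    (hastar : ∀ s a, R s a ≤ R s (astar s))
    -- optimal value functions, by backward recursion
    (hVstar_top : ∀ s, Vstar (T + 1) s = 0)
    (hQstar : ∀ h ≤ T, ∀ s a, Qstar h s a = R s a + ∑ s', p a s s' * Vstar (h + 1) s')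
    (hVstar : ∀ h ≤ T, ∀ s,
      Vstar h s = Finset.univ.sup' Finset.univ_nonempty (fun a => Qstar h s a))
    -- K-step lookahead reward, by recursion
    (hr_one : ∀ s a, r 1 s a = R s a)
    (hr_succ : ∀ k, 1 ≤ k → ∀ s a,
      r (k + 1) s a = R s a +
        ∑ s', p a s s' * Finset.univ.sup' Finset.univ_nonempty (fun a' => r k s' a'))
    -- stochastic dominance assumption
    (hdom_reward : Finset.univ.sup' Finset.univ_nonempty (fun a => R 0 a)
      ≤ Finset.univ.sup' Finset.univ_nonempty (fun a => R 1 a))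
    (hdom_trans : ∀ s a, p a s 1 ≤ p (astar s) s 1)
    -- uniqueness of the maximizer of `a ↦ Q*_h(s,a)` for every `h ≤ T`, `s`
    (huniq : ∀ h ≤ T, ∀ s, ∃! a : A, ∀ a', Qstar h s a' ≤ Qstar h s a) :
    -- (1) `a*_s` is the unique maximizer of `a ↦ r^K(s,a)` for every `K ≥ 1`
    (∀ K, 1 ≤ K → ∀ s,
      (∀ a, r K s a ≤ r K s (astar s)) ∧
      (∀ a : A, (∀ a', r K s a' ≤ r K s a) → a = astar s)) ∧
    -- (2) every K-step lookahead greedy value function equals the optimal one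
    (∀ K, 1 ≤ K → ∀ (b : ℕ → Fin 2 → A) (VKg : ℕ → Fin 2 → ℝ),
      (∀ h ≤ T, ∀ s a,
        r (min (T - h + 1) K) s a ≤ r (min (T - h + 1) K) s (b h s)) →
      (∀ s, VKg (T + 1) s = 0) →
      (∀ h ≤ T, ∀ s,
        VKg h s = R s (b h s) + ∑ s', p (b h s) s s' * VKg (h + 1) s') →
      ∀ h ≤ T + 1, ∀ s, VKg h s = Vstar h s) := by

  classical
  have hsup_eq : ∀ (f : A → ℝ) (a0 : A), (∀ a, f a ≤ f a0) →
      Finset.univ.sup' Finset.univ_nonempty f = f a0 := by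
    intro f a0 h
    exact le_antisymm (Finset.sup'_le _ _ fun a _ => h a) (Finset.le_sup' f (Finset.mem_univ a0))
  have hple : ∀ a s, p a s 1 ≤ 1 := by
    intro a s
    have h := hp_sum a s
    rw [Fin.sum_univ_two] at h
    nlinarith [hp_nonneg a s 0]
  have hp0 : ∀ a s, p a s 0 = 1 - p a s 1 := by
    intro a s
    have h := hp_sum a s
    rw [Fin.sum_univ_two] at h
    linarith
  set M : ℕ → Fin 2 → ℝ :=
    fun k s => Finset.univ.sup' Finset.univ_nonempty (fun a => r k s a) with hMdef
  have hrec : ∀ k, 1 ≤ k → ∀ s a,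
      r (k + 1) s a = R s a + M k 0 + p a s 1 * (M k 1 - M k 0) := by
    intro k hk s a
    rw [hr_succ k hk s a, Fin.sum_univ_two, hp0]
    ring
  have hDR : 0 ≤ R 1 (astar 1) - R 0 (astar 0) := by
    have h0 := hsup_eq (fun a => R 0 a) (astar 0) (hastar 0)
    have h1 := hsup_eq (fun a => R 1 a) (astar 1) (hastar 1)
    have hd := hdom_reward
    rw [h0, h1] at hd
    simpa using hd
  have maxstep : ∀ k, 1 ≤ k → (∀ s a, r k s a ≤ r k s (astar s)) →
      0 ≤ r k 1 (astar 1) - r k 0 (astar 0) →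
      ∀ s a, r (k + 1) s a ≤ r (k + 1) s (astar s) := by
    intro k hk hmax hD s a
    have hM0 : M k 0 = r k 0 (astar 0) := hsup_eq _ _ (hmax 0)
    have hM1 : M k 1 = r k 1 (astar 1) := hsup_eq _ _ (hmax 1)
    rw [hrec k hk, hrec k hk]
    have h1 : R s a ≤ R s (astar s) := hastar s a
    have h2 : p a s 1 * (M k 1 - M k 0) ≤ p (astar s) s 1 * (M k 1 - M k 0) := by
      apply mul_le_mul_of_nonneg_right (hdom_trans s a)
      rw [hM0, hM1]; linarith
    linarith
  have deltaeq : ∀ k, 1 ≤ k → (∀ s a, r k s a ≤ r k s (astar s)) →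
      r (k + 1) 1 (astar 1) - r (k + 1) 0 (astar 0) =
        (R 1 (astar 1) - R 0 (astar 0)) +
        (p (astar 1) 1 1 - p (astar 0) 0 1) * (r k 1 (astar 1) - r k 0 (astar 0)) := by
    intro k hk hmax
    have hM0 : M k 0 = r k 0 (astar 0) := hsup_eq _ _ (hmax 0)
    have hM1 : M k 1 = r k 1 (astar 1) := hsup_eq _ _ (hmax 1)
    rw [hrec k hk, hrec k hk, hM0, hM1]; ring
  have hcge : -1 ≤ p (astar 1) 1 1 - p (astar 0) 0 1 := by
    have := hp_nonneg (astar 1) 1 1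
    have := hple (astar 0) 0
    linarith
  have G1max : ∀ s a, r 1 s a ≤ r 1 s (astar s) := by
    intro s a; rw [hr_one, hr_one]; exact hastar s a
  have G1D : 0 ≤ r 1 1 (astar 1) - r 1 0 (astar 0) := by
    rw [hr_one, hr_one]; exact hDR
  have G1Deq : r 1 1 (astar 1) - r 1 0 (astar 0) = R 1 (astar 1) - R 0 (astar 0) := by
    rw [hr_one, hr_one]
  have key : ∀ k,
      ((∀ s a, r (k + 1) s a ≤ r (k + 1) s (astar s)) ∧
        0 ≤ r (k + 1) 1 (astar 1) - r (k + 1) 0 (astar 0)) ∧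
      ((∀ s a, r (k + 2) s a ≤ r (k + 2) s (astar s)) ∧
        0 ≤ r (k + 2) 1 (astar 1) - r (k + 2) 0 (astar 0)) := by
    intro k
    induction k with
    | zero =>
      refine ⟨⟨G1max, G1D⟩, ?_⟩
      have hm2 : ∀ s a, r 2 s a ≤ r 2 s (astar s) := maxstep 1 le_rfl G1max G1D
      have hd2 := deltaeq 1 le_rfl G1max
      rw [G1Deq] at hd2
      constructor
      · exact hm2
      · rw [show (0:ℕ) + 2 = 1 + 1 by rfl, hd2]
        nlinarith [hDR, hcge]
    | succ n ih =>
      obtain ⟨⟨m1, d1⟩, ⟨m2, d2⟩⟩ := ih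
      refine ⟨⟨m2, d2⟩, ?_, ?_⟩
      · have : n + 1 + 2 = (n + 2) + 1 := by ring
        rw [this]
        exact maxstep (n + 2) (by omega) m2 d2
      · have e2 := deltaeq (n + 1) (by omega) m1
        have e3 := deltaeq (n + 2) (by omega) m2
        have : n + 1 + 2 = (n + 2) + 1 := by ring
        rw [this, e3, show n + 2 = (n+1) + 1 by ring, e2]
        nlinarith [hDR, hcge, d1, sq_nonneg (p (astar 1) 1 1 - p (astar 0) 0 1)]
  have Gall : ∀ k, 1 ≤ k → (∀ s a, r k s a ≤ r k s (astar s)) ∧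
      0 ≤ r k 1 (astar 1) - r k 0 (astar 0) := by
    intro k hk
    obtain ⟨k, rfl⟩ : ∃ m, k = m + 1 := ⟨k - 1, by omega⟩
    exact (key k).1
  -- uniqueness of the R-maximizer, from huniq at h = T
  have hQT : ∀ s a, Qstar T s a = R s a := by
    intro s a
    rw [hQstar T le_rfl s a]
    simp [hVstar_top]
  have hRuniq : ∀ (s : Fin 2) (a : A), (∀ a', R s a' ≤ R s a) → a = astar s := by
    intro s a ha
    obtain ⟨c, _, hcu⟩ := huniq T le_rfl s
    have h1 := hcu a (fun a' => by rw [hQT, hQT]; exact ha a')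
    have h2 := hcu (astar s) (fun a' => by rw [hQT, hQT]; exact hastar s a')
    rw [h1, h2]
  have part1 : ∀ K, 1 ≤ K → ∀ s,
      (∀ a, r K s a ≤ r K s (astar s)) ∧
      (∀ a : A, (∀ a', r K s a' ≤ r K s a) → a = astar s) := by
    intro K hK s
    refine ⟨fun a => (Gall K hK).1 s a, ?_⟩
    intro a ha
    rcases Nat.lt_or_ge K 2 with hK2 | hK2
    · have hK1 : K = 1 := by omega
      subst hK1
      apply hRuniq s a
      intro a'
      have := ha a'
      rw [hr_one, hr_one] at this
      exact this
    · obtain ⟨k, rfl⟩ : ∃ m, K = m + 1 := ⟨K - 1, by omega⟩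
      have hk1 : 1 ≤ k := by omega
      obtain ⟨hmaxk, hDk⟩ := Gall k hk1
      have hM0 : M k 0 = r k 0 (astar 0) := hsup_eq _ _ (hmaxk 0)
      have hM1 : M k 1 = r k 1 (astar 1) := hsup_eq _ _ (hmaxk 1)
      have hDM : 0 ≤ M k 1 - M k 0 := by rw [hM0, hM1]; linarith
      have h1 := ha (astar s)
      rw [hrec k hk1, hrec k hk1] at h1
      have h2 : p a s 1 * (M k 1 - M k 0) ≤ p (astar s) s 1 * (M k 1 - M k 0) :=
        mul_le_mul_of_nonneg_right (hdom_trans s a) hDM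
      have hRa : ∀ a', R s a' ≤ R s a := fun a' => le_trans (hastar s a') (by linarith)
      exact hRuniq s a hRa
  -- identification Qstar h = r (d+1) for h + d = T
  have hQr : ∀ d h, h + d = T → ∀ s a, Qstar h s a = r (d + 1) s a := by
    intro d
    induction d with
    | zero =>
      intro h hh s a
      have : h = T := by omega
      subst this
      rw [hQT, hr_one]
    | succ n ih =>
      intro h hh s a
      have hhT : h ≤ T := by omega
      have hV : ∀ s', Vstar (h + 1) s' =
          Finset.univ.sup' Finset.univ_nonempty (fun a' => r (n + 1) s' a') := by
        intro s'
        rw [hVstar (h + 1) (by omega) s']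
        congr 1
        funext a'
        exact ih (h + 1) (by omega) s' a'
      rw [hQstar h hhT s a, hr_succ (n + 1) (by omega) s a]
      congr 1
      apply Finset.sum_congr rfl
      intro s' _
      rw [hV s']
  have hVQ : ∀ h ≤ T, ∀ s, Vstar h s = Qstar h s (astar s) := by
    intro h hh s
    rw [hVstar h hh s]
    apply hsup_eq
    intro a
    rw [hQr (T - h) h (by omega) s a, hQr (T - h) h (by omega) s (astar s)]
    exact (Gall (T - h + 1) (by omega)).1 s a
  refine ⟨part1, ?_⟩
  intro K hK b VKg hb hVKg_top hVKg_rec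
  have hbastar : ∀ h ≤ T, ∀ s, b h s = astar s := by
    intro h hh s
    have hm : 1 ≤ min (T - h + 1) K := by omega
    exact (part1 _ hm s).2 (b h s) (hb h hh s)
  have main : ∀ d h, h + d = T + 1 → ∀ s, VKg h s = Vstar h s := by
    intro d
    induction d with
    | zero =>
      intro h hh s
      have : h = T + 1 := by omega
      subst this
      rw [hVKg_top, hVstar_top]
    | succ n ih =>
      intro h hh s
      have hhT : h ≤ T := by omega
      rw [hVKg_rec h hhT s, hbastar h hhT s, hVQ h hhT s, hQstar h hhT s (astar s)]
      congr 1
      apply Finset.sum_congr rfl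
      intro s' _
      rw [ih (h + 1) (by omega) s']
  intro h hh s
  exact main (T + 1 - h) h (by omega) s
end

section
/- Consider a two-state finite-horizon MDP under the stochastic dominance assumption, and suppose additionally that p a*_1 1 1 ≥ p a*_0 0 1. Then the greedy value function is monotone in the state: V^g_k(1) ≥ V^g_k(0) for every 0 ≤ k ≤ T+1. -/
/-- In a two-state finite-horizon MDP under the stochastic dominance
assumption, with additionally `p a*_1 1 1 ≥ p a*_0 0 1`, the greedy value function
is monotone in the state: `V^g_k(1) ≥ V^g_k(0)` for every `0 ≤ k ≤ T+1`. -/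
theorem greedy_value_monotone_two_state
    {A : Type} [Fintype A] [Nonempty A]
    (p : A → Fin 2 → Fin 2 → ℝ) (R : Fin 2 → A → ℝ)
    (hp_nonneg : ∀ a s s', 0 ≤ p a s s')
    (hp_sum : ∀ a s, ∑ s', p a s s' = 1)
    (T : ℕ)
    (Vg : ℕ → Fin 2 → ℝ)
    (astar : Fin 2 → A)
    -- `a*_s` is a one-step greedy action: a maximizer of `R(s,·)`
    (hastar : ∀ s a, R s a ≤ R s (astar s))
    -- greedy value function, by backward recursion
    (hVg_top : ∀ s, Vg (T + 1) s = 0)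
    (hVg : ∀ h ≤ T, ∀ s,
      Vg h s = R s (astar s) + ∑ s', p (astar s) s s' * Vg (h + 1) s')
    -- stochastic dominance assumption
    (hdom_reward : Finset.univ.sup' Finset.univ_nonempty (fun a => R 0 a)
      ≤ Finset.univ.sup' Finset.univ_nonempty (fun a => R 1 a))
    (hdom_trans : ∀ s a, p a s 1 ≤ p (astar s) s 1)
    -- additional hypothesis
    (hcase : p (astar 0) 0 1 ≤ p (astar 1) 1 1) :
    ∀ k ≤ T + 1, Vg k 0 ≤ Vg k 1 := by
  have hR : R 0 (astar 0) ≤ R 1 (astar 1) := by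
    have h0 : Finset.univ.sup' Finset.univ_nonempty (fun a => R 0 a) = R 0 (astar 0) :=
      le_antisymm (Finset.sup'_le _ _ fun a _ => hastar 0 a) (Finset.le_sup' _ (Finset.mem_univ _))
    have h1 : Finset.univ.sup' Finset.univ_nonempty (fun a => R 1 a) = R 1 (astar 1) :=
      le_antisymm (Finset.sup'_le _ _ fun a _ => hastar 1 a) (Finset.le_sup' _ (Finset.mem_univ _))
    rw [h0, h1] at hdom_reward; exact hdom_reward
  have e0 : ∀ a s, p a s 0 = 1 - p a s 1 := by
    intro a s
    have := hp_sum a s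
    rw [Fin.sum_univ_two] at this
    linarith
  have key : ∀ j, j ≤ T + 1 → Vg (T + 1 - j) 0 ≤ Vg (T + 1 - j) 1 := by
    intro j
    induction j with
    | zero => intro _; simp [hVg_top]
    | succ n ih =>
      intro hn
      have hle : T + 1 - (n + 1) ≤ T := by omega
      set k := T + 1 - (n + 1) with hk
      have hk1 : k + 1 = T + 1 - n := by omega
      have ihV : Vg (k + 1) 0 ≤ Vg (k + 1) 1 := by
        rw [hk1]; exact ih (by omega)
      rw [hVg k hle 0, hVg k hle 1, Fin.sum_univ_two, Fin.sum_univ_two]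
      simp only [e0]
      nlinarith [hcase, ihV, hR, hp_nonneg (astar 0) 0 1, hp_nonneg (astar 1) 1 1,
        mul_le_mul_of_nonneg_right hcase (sub_nonneg.mpr ihV)]
  intro k hk
  have h := key (T + 1 - k) (by omega)
  rwa [show T + 1 - (T + 1 - k) = k by omega] at h
end

section
/- Consider a two-state finite-horizon MDP in which R(1,a*_1) ≥ R(0,a*_0) and p a*_1 1 1 ≤ p a*_0 0 1. Then for every 0 ≤ k ≤ T+1 the greedy value difference is sandwiched: 0 ≤ V^g_k(1) − V^g_k(0) ≤ R(1,a*_1) − R(0,a*_0). -/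
/-- In a two-state finite-horizon MDP in which `R(1,a*_1) ≥ R(0,a*_0)`
and `p a*_1 1 1 ≤ p a*_0 0 1`, the greedy value difference is sandwiched:
`0 ≤ V^g_k(1) − V^g_k(0) ≤ R(1,a*_1) − R(0,a*_0)` for every `0 ≤ k ≤ T+1`. -/
theorem greedy_value_difference_sandwich_two_state
    {A : Type} [Fintype A] [Nonempty A]
    (p : A → Fin 2 → Fin 2 → ℝ) (R : Fin 2 → A → ℝ)
    (hp_nonneg : ∀ a s s', 0 ≤ p a s s')
    (hp_sum : ∀ a s, ∑ s', p a s s' = 1)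
    (T : ℕ)
    (Vg : ℕ → Fin 2 → ℝ)
    (astar : Fin 2 → A)
    -- `a*_s` is a one-step greedy action: a maximizer of `R(s,·)`
    (hastar : ∀ s a, R s a ≤ R s (astar s))
    -- greedy value function, by backward recursion
    (hVg_top : ∀ s, Vg (T + 1) s = 0)
    (hVg : ∀ h ≤ T, ∀ s,
      Vg h s = R s (astar s) + ∑ s', p (astar s) s s' * Vg (h + 1) s')
    -- assumptions of the statement
    (hR : R 0 (astar 0) ≤ R 1 (astar 1))
    (hcase : p (astar 1) 1 1 ≤ p (astar 0) 0 1) :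
    ∀ k ≤ T + 1, 0 ≤ Vg k 1 - Vg k 0 ∧ Vg k 1 - Vg k 0 ≤ R 1 (astar 1) - R 0 (astar 0) := by
  have hq0le1 : p (astar 0) 0 1 ≤ 1 := by
    have := hp_sum (astar 0) 0
    rw [Fin.sum_univ_two] at this
    nlinarith [hp_nonneg (astar 0) 0 0]
  have key : ∀ j k, k + j = T + 1 →
      0 ≤ Vg k 1 - Vg k 0 ∧ Vg k 1 - Vg k 0 ≤ R 1 (astar 1) - R 0 (astar 0) := by
    intro j
    induction j with
    | zero =>
      intro k hk
      simp only [Nat.add_zero] at hk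
      subst hk
      rw [hVg_top, hVg_top]
      constructor <;> linarith
    | succ n ih =>
      intro k hk
      have hk1 : (k + 1) + n = T + 1 := by omega
      have hkT : k ≤ T := by omega
      obtain ⟨ih1, ih2⟩ := ih (k + 1) hk1
      have e1 := hVg k hkT 1
      have e0 := hVg k hkT 0
      rw [Fin.sum_univ_two] at e1 e0
      have s1 := hp_sum (astar 1) 1
      have s0 := hp_sum (astar 0) 0
      rw [Fin.sum_univ_two] at s1 s0
      have h10 : p (astar 1) 1 0 = 1 - p (astar 1) 1 1 := by linarith
      have h00 : p (astar 0) 0 0 = 1 - p (astar 0) 0 1 := by linarith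
      have hd : Vg k 1 - Vg k 0 = (R 1 (astar 1) - R 0 (astar 0)) +
          (p (astar 1) 1 1 - p (astar 0) 0 1) * (Vg (k + 1) 1 - Vg (k + 1) 0) := by
        rw [e1, e0, h10, h00]; ring
      constructor
      · rw [hd]
        nlinarith [hp_nonneg (astar 1) 1 1]
      · rw [hd]
        nlinarith
  intro k hk
  exact key (T + 1 - k) k (by omega)
end

section
/- Consider a two-state finite-horizon MDP under the stochastic dominance assumption. Then the optimal value function is monotone in the state: V*_k(1) ≥ V*_k(0) for every 0 ≤ k ≤ T+1. -/
/-- In a two-state finite-horizon MDP under the stochastic dominance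
assumption, the optimal value function is monotone in the state:
`V*_k(1) ≥ V*_k(0)` for every `0 ≤ k ≤ T+1`. -/
theorem optimal_value_monotone_two_state
    {A : Type} [Fintype A] [Nonempty A]
    (p : A → Fin 2 → Fin 2 → ℝ) (R : Fin 2 → A → ℝ)
    (hp_nonneg : ∀ a s s', 0 ≤ p a s s')
    (hp_sum : ∀ a s, ∑ s', p a s s' = 1)
    (T : ℕ)
    (Vstar : ℕ → Fin 2 → ℝ) (Qstar : ℕ → Fin 2 → A → ℝ)
    (astar : Fin 2 → A)
    -- `a*_s` is a one-step greedy action: a maximizer of `R(s,·)`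
    (hastar : ∀ s a, R s a ≤ R s (astar s))
    -- optimal value functions, by backward recursion
    (hVstar_top : ∀ s, Vstar (T + 1) s = 0)
    (hQstar : ∀ h ≤ T, ∀ s a, Qstar h s a = R s a + ∑ s', p a s s' * Vstar (h + 1) s')
    (hVstar : ∀ h ≤ T, ∀ s,
      Vstar h s = Finset.univ.sup' Finset.univ_nonempty (fun a => Qstar h s a))
    -- stochastic dominance assumption
    (hdom_reward : Finset.univ.sup' Finset.univ_nonempty (fun a => R 0 a)
      ≤ Finset.univ.sup' Finset.univ_nonempty (fun a => R 1 a))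
    (hdom_trans : ∀ s a, p a s 1 ≤ p (astar s) s 1) :
    ∀ k ≤ T + 1, Vstar k 0 ≤ Vstar k 1 := by
  -- abbreviations
  set δ : ℝ := R 1 (astar 1) - R 0 (astar 0) with hδdef
  set c : ℝ := p (astar 1) 1 1 - p (astar 0) 0 1 with hcdef
  -- the greedy action attains the sup of rewards
  have hsupR : ∀ s : Fin 2, Finset.univ.sup' Finset.univ_nonempty (fun a => R s a)
      = R s (astar s) := by
    intro s
    apply le_antisymm
    · exact Finset.sup'_le _ _ (fun a _ => hastar s a)
    · exact Finset.le_sup' _ (Finset.mem_univ _)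
  have hδ : 0 ≤ δ := by
    have h0 := hsupR 0
    have h1 := hsupR 1
    rw [h0, h1] at hdom_reward
    simp only [hδdef]; linarith
  -- bounds on c
  have hc_bound : -1 ≤ c ∧ c ≤ 1 := by
    have h1 := hp_nonneg (astar 1) 1 1
    have h2 := hp_nonneg (astar 0) 0 1
    have h3 := hp_sum (astar 1) 1
    have h4 := hp_sum (astar 0) 0
    rw [Fin.sum_univ_two] at h3 h4
    have h5 := hp_nonneg (astar 1) 1 0
    have h6 := hp_nonneg (astar 0) 0 0
    constructor <;> (simp only [hcdef]; linarith)
  -- rewrite Q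
  have hQ : ∀ h ≤ T, ∀ s a, Qstar h s a
      = R s a + Vstar (h+1) 0 + p a s 1 * (Vstar (h+1) 1 - Vstar (h+1) 0) := by
    intro h hh s a
    rw [hQstar h hh s a, Fin.sum_univ_two]
    have hs := hp_sum a s
    rw [Fin.sum_univ_two] at hs
    have hp0 : p a s 0 = 1 - p a s 1 := by linarith
    rw [hp0]; ring
  -- value at a state equals Q at the greedy action, given monotonicity one step later
  have hVeq : ∀ h ≤ T, Vstar (h+1) 0 ≤ Vstar (h+1) 1 → ∀ s,
      Vstar h s = R s (astar s) + Vstar (h+1) 0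
        + p (astar s) s 1 * (Vstar (h+1) 1 - Vstar (h+1) 0) := by
    intro h hh hmono s
    rw [hVstar h hh s]
    apply le_antisymm
    · apply Finset.sup'_le
      intro a _
      rw [hQ h hh s a]
      have h1 := hastar s a
      have h2 : p a s 1 * (Vstar (h+1) 1 - Vstar (h+1) 0)
          ≤ p (astar s) s 1 * (Vstar (h+1) 1 - Vstar (h+1) 0) :=
        mul_le_mul_of_nonneg_right (hdom_trans s a) (by linarith)
      linarith
    · rw [← hQ h hh s (astar s)]
      exact Finset.le_sup' _ (Finset.mem_univ _)
  -- main downward induction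
  have main : ∀ n : ℕ, ∀ k : ℕ, k + n = T + 1 →
      Vstar k 0 ≤ Vstar k 1 ∧ -δ ≤ c * (Vstar k 1 - Vstar k 0) := by
    intro n
    induction n with
    | zero =>
      intro k hk
      have hk' : k = T + 1 := by omega
      subst hk'
      rw [hVstar_top 0, hVstar_top 1]
      refine ⟨le_rfl, ?_⟩
      simp only [sub_zero, mul_zero]
      linarith
    | succ n ih =>
      intro k hk
      have hkT : k ≤ T := by omega
      obtain ⟨ih1, ih2⟩ := ih (k+1) (by omega)
      have e0 := hVeq k hkT ih1 0
      have e1 := hVeq k hkT ih1 1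
      have hΔ : Vstar k 1 - Vstar k 0 = δ + c * (Vstar (k+1) 1 - Vstar (k+1) 0) := by
        rw [e0, e1]; simp only [hδdef, hcdef]; ring
      obtain ⟨hc1, hc2⟩ := hc_bound
      constructor
      · linarith
      · nlinarith [mul_nonneg (mul_self_nonneg c) (sub_nonneg.2 ih1),
          mul_le_mul_of_nonneg_right hc1 hδ]
  intro k hk
  exact (main (T + 1 - k) k (by omega)).1
end

section
/- Linear optimality gap of K-step lookahead greedy (Theorem 3.2): for every T, K ∈ ℕ with 1 ≤ K < T and every pair of finite sets S, A with |S| ≥ 2 and |A| ≥ 2, there exist a transition kernel p : A → S → S → ℝ (nonnegative, rows summing to 1), a reward function R : S → A → ℝ taking values in [−(K+1), 0], and a state s ∈ S such that every K-step lookahead greedy value function V^{K,g} (for any choice of maximizing actions) satisfies V*_0(s) − V^{K,g}_0(s) = T − K. In particular, the optimality gap of the K-step lookahead greedy policy can grow linearly in T. -/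
/-- Theorem 3.2: Linear optimality gap of K-step lookahead greedy.
For every `T, K` with `1 ≤ K < T` and every pair of finite sets `S, A` with
`|S| ≥ 2` and `|A| ≥ 2`, there exist a transition kernel `p` (nonnegative, rows
summing to 1), a reward function `R` taking values in `[−(K+1), 0]`, and a state
`s` such that every K-step lookahead greedy value function `V^{K,g}` (for any
choice of maximizing actions) satisfies `V*_0(s) − V^{K,g}_0(s) = T − K`. -/
theorem k_step_greedy_linear_gap
    (T K : ℕ) (hK : 1 ≤ K) (hKT : K < T)
    {S A : Type} [Fintype S] [Fintype A] [Nonempty S] [Nonempty A]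
    (hS : 2 ≤ Fintype.card S) (hA : 2 ≤ Fintype.card A) :
    ∃ (p : A → S → S → ℝ) (R : S → A → ℝ) (s : S),
      (∀ a s₁ s₂, 0 ≤ p a s₁ s₂) ∧
      (∀ a s₁, ∑ s₂, p a s₁ s₂ = 1) ∧
      (∀ s₁ a, R s₁ a ∈ Set.Icc (-(K + 1 : ℝ)) 0) ∧
      (∀ (Vstar : ℕ → S → ℝ) (Qstar : ℕ → S → A → ℝ) (r : ℕ → S → A → ℝ)
         (b : ℕ → S → A) (VKg : ℕ → S → ℝ),
        -- optimal value functions, by backward recursion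
        (∀ s₁, Vstar (T + 1) s₁ = 0) →
        (∀ h ≤ T, ∀ s₁ a,
          Qstar h s₁ a = R s₁ a + ∑ s₂, p a s₁ s₂ * Vstar (h + 1) s₂) →
        (∀ h ≤ T, ∀ s₁,
          Vstar h s₁ = Finset.univ.sup' Finset.univ_nonempty (fun a => Qstar h s₁ a)) →
        -- K-step lookahead reward, by recursion
        (∀ s₁ a, r 1 s₁ a = R s₁ a) →
        (∀ k, 1 ≤ k → ∀ s₁ a,
          r (k + 1) s₁ a = R s₁ a +
            ∑ s₂, p a s₁ s₂ * Finset.univ.sup' Finset.univ_nonempty (fun a' => r k s₂ a')) →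
        -- `b h s₁` is any maximizer of `a ↦ r^{min(T−h+1,K)}(s₁,a)`
        (∀ h ≤ T, ∀ s₁ a,
          r (min (T - h + 1) K) s₁ a ≤ r (min (T - h + 1) K) s₁ (b h s₁)) →
        -- K-step lookahead greedy value function, by backward recursion
        (∀ s₁, VKg (T + 1) s₁ = 0) →
        (∀ h ≤ T, ∀ s₁,
          VKg h s₁ = R s₁ (b h s₁) + ∑ s₂, p (b h s₁) s₁ s₂ * VKg (h + 1) s₂) →
        Vstar 0 s - VKg 0 s = (T : ℝ) - (K : ℝ)) := by
  classical
  obtain ⟨s0, s1, hs01⟩ := Fintype.exists_pair_of_one_lt_card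
    (show 1 < Fintype.card S by omega)
  obtain ⟨a0, a1, ha01⟩ := Fintype.exists_pair_of_one_lt_card
    (show 1 < Fintype.card A by omega)
  set p : A → S → S → ℝ :=
    fun a s s' => if a = a0 then (if s' = s then 1 else 0) else (if s' = s1 then 1 else 0)
    with hpdef
  set R : S → A → ℝ :=
    fun s a => if s = s0 then (if a = a0 then (-1) else -(K + 1)) else 0 with hRdef
  have hsum : ∀ (c : S) (g : S → ℝ),
      ∑ s₂, (if s₂ = c then (1:ℝ) else 0) * g s₂ = g c := by
    intro c g; simp [ite_mul]
  have hpsum : ∀ (a : A) (s : S) (g : S → ℝ),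
      ∑ s₂, p a s s₂ * g s₂ = g (if a = a0 then s else s1) := by
    intro a s g
    by_cases h : a = a0 <;> simp only [hpdef, h, if_true, if_false, if_pos, if_neg] <;>
      simp [h, hsum]
  refine ⟨p, R, s0, ?_, ?_, ?_, ?_⟩
  · intro a s₂ s₃
    simp only [hpdef]
    split_ifs <;> norm_num
  · intro a s₂
    by_cases h : a = a0 <;> simp [hpdef, h]
  · intro s₂ a
    have h1 : (1:ℝ) ≤ (K:ℝ) + 1 := by
      have : (1:ℝ) ≤ (K:ℝ) := by exact_mod_cast hK
      linarith
    simp only [hRdef, Set.mem_Icc]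
    split_ifs <;> constructor <;> linarith
  · intro Vstar Qstar r b VKg hV0 hQ hVs hr1 hrk hb hVKg0 hVKgrec
    -- outside s0, all lookahead rewards are 0
    have hr_out : ∀ k, 1 ≤ k → ∀ s, s ≠ s0 → ∀ a, r k s a = 0 := by
      intro k hk
      induction k, hk using Nat.le_induction with
      | base =>
        intro s hs a
        rw [hr1]; simp [hRdef, hs]
      | succ k hk ih =>
        intro s hs a
        rw [hrk k hk, hpsum]
        have hsup : ∀ c : S, c ≠ s0 →
            Finset.univ.sup' Finset.univ_nonempty (fun a' => r k c a') = 0 := by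
          intro c hc
          apply le_antisymm
          · exact Finset.sup'_le _ _ fun a' _ => le_of_eq (ih c hc a')
          · calc (0:ℝ) = r k c a0 := (ih c hc a0).symm
              _ ≤ _ := Finset.le_sup' _ (Finset.mem_univ a0)
        have hRz : R s a = 0 := by simp [hRdef, hs]
        rw [hRz]
        by_cases h : a = a0
        · simp only [h, if_true]; rw [hsup s hs]; ring
        · simp only [h, if_false]; rw [hsup s1 (Ne.symm hs01)]; ring
    -- values of r at s0
    have hr_s0 : ∀ k, 1 ≤ k → k ≤ K + 1 →
        r k s0 a0 = -(k:ℝ) ∧ ∀ a, a ≠ a0 → r k s0 a = -((K:ℝ) + 1) := by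
      intro k hk
      induction k, hk using Nat.le_induction with
      | base =>
        intro _
        constructor
        · rw [hr1]; simp [hRdef]
        · intro a ha; rw [hr1]; simp [hRdef, ha]
      | succ k hk ih =>
        intro hk1
        have hkK : k ≤ K := by omega
        obtain ⟨ha0, hrest⟩ := ih (by omega)
        have hsup0 : Finset.univ.sup' Finset.univ_nonempty (fun a' => r k s0 a') = -(k:ℝ) := by
          apply le_antisymm
          · apply Finset.sup'_le
            intro a' _
            by_cases h : a' = a0
            · rw [h, ha0]
            · rw [hrest a' h]
              have : (k:ℝ) ≤ (K:ℝ) := by exact_mod_cast hkK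
              linarith
          · calc -(k:ℝ) = r k s0 a0 := ha0.symm
              _ ≤ _ := Finset.le_sup' _ (Finset.mem_univ a0)
        have hsup1 : Finset.univ.sup' Finset.univ_nonempty (fun a' => r k s1 a') = 0 := by
          apply le_antisymm
          · exact Finset.sup'_le _ _ fun a' _ => le_of_eq (hr_out k hk s1 (Ne.symm hs01) a')
          · calc (0:ℝ) = r k s1 a0 := (hr_out k hk s1 (Ne.symm hs01) a0).symm
              _ ≤ _ := Finset.le_sup' _ (Finset.mem_univ a0)
        constructor
        · rw [hrk k hk, hpsum, if_pos rfl, hsup0]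
          have : R s0 a0 = -1 := by simp [hRdef]
          rw [this]; push_cast; ring
        · intro a ha
          rw [hrk k hk, hpsum]
          simp only [ha, if_false, hsup1]
          have : R s0 a = -((K:ℝ) + 1) := by simp [hRdef, ha]
          rw [this]; ring
    -- greedy always picks a0 at s0
    have hB : ∀ h, h ≤ T → b h s0 = a0 := by
      intro h hh
      by_contra hne
      set m := min (T - h + 1) K with hm
      have hm1 : 1 ≤ m := by omega
      have hmK : m ≤ K := by omega
      obtain ⟨hma0, hmrest⟩ := hr_s0 m hm1 (by omega)
      have := hb h hh s0 a0
      rw [← hm] at this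
      rw [hma0, hmrest _ hne] at this
      have hmr : (m:ℝ) ≤ (K:ℝ) := by exact_mod_cast hmK
      linarith
    -- greedy value function
    have hVKg : ∀ j, j ≤ T + 1 → VKg (T + 1 - j) s0 = -(j:ℝ) := by
      intro j
      induction j with
      | zero => intro _; simpa using hVKg0 s0
      | succ j ih =>
        intro hj
        have hh : T + 1 - (j + 1) = T - j := by omega
        have hhT : T - j ≤ T := by omega
        rw [hh, hVKgrec (T - j) hhT s0, hB (T - j) hhT, hpsum, if_pos rfl]
        have h2 : T - j + 1 = T + 1 - j := by omega
        rw [h2, ih (by omega)]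
        have : R s0 a0 = -1 := by simp [hRdef]
        rw [this]; push_cast; ring
    -- optimal value function
    have hVst : ∀ j, j ≤ T + 1 →
        (∀ s, s ≠ s0 → Vstar (T + 1 - j) s = 0) ∧
        Vstar (T + 1 - j) s0 = -((min j (K + 1) : ℕ) : ℝ) := by
      intro j
      induction j with
      | zero =>
        intro _
        simp only [Nat.sub_zero]
        exact ⟨fun s _ => hV0 s, by simpa using hV0 s0⟩
      | succ j ih =>
        intro hj
        obtain ⟨ihout, ihs0⟩ := ih (by omega)
        have hh : T + 1 - (j + 1) = T - j := by omega
        have hhT : T - j ≤ T := by omega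
        have h2 : T - j + 1 = T + 1 - j := by omega
        have hQval : ∀ s a, Qstar (T - j) s a =
            R s a + Vstar (T + 1 - j) (if a = a0 then s else s1) := by
          intro s a
          rw [hQ (T - j) hhT s a, hpsum, h2]
        constructor
        · intro s hs
          rw [hh, hVs (T - j) hhT s]
          have hq0 : ∀ a, Qstar (T - j) s a = 0 := by
            intro a
            rw [hQval]
            by_cases h : a = a0
            · subst h
              rw [if_pos rfl, ihout s hs]
              simp [hRdef, hs]
            · rw [if_neg h, ihout s1 (Ne.symm hs01)]
              simp [hRdef, hs]
          apply le_antisymm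
          · exact Finset.sup'_le _ _ fun a _ => le_of_eq (hq0 a)
          · calc (0:ℝ) = Qstar (T - j) s a0 := (hq0 a0).symm
              _ ≤ _ := Finset.le_sup' _ (Finset.mem_univ a0)
        · rw [hh, hVs (T - j) hhT s0]
          have hqa0 : Qstar (T - j) s0 a0 = -1 - ((min j (K + 1) : ℕ) : ℝ) := by
            rw [hQval, if_pos rfl, ihs0]
            have : R s0 a0 = -1 := by simp [hRdef]
            rw [this]; ring
          have hqrest : ∀ a, a ≠ a0 → Qstar (T - j) s0 a = -((K:ℝ) + 1) := by
            intro a ha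
            rw [hQval, if_neg ha, ihout s1 (Ne.symm hs01)]
            have : R s0 a = -((K:ℝ) + 1) := by simp [hRdef, ha]
            rw [this]; ring
          by_cases hjK : j ≤ K
          · have hmin1 : min j (K + 1) = j := by omega
            have hmin2 : min (j + 1) (K + 1) = j + 1 := by omega
            rw [hmin2]
            apply le_antisymm
            · apply Finset.sup'_le
              intro a _
              by_cases h : a = a0
              · rw [h, hqa0, hmin1]; push_cast; linarith
              · rw [hqrest a h]
                have : ((j:ℝ) + 1) ≤ (K:ℝ) + 1 := by
                  have : (j:ℝ) ≤ (K:ℝ) := by exact_mod_cast hjK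
                  linarith
                push_cast; linarith
            · have : Qstar (T - j) s0 a0 = -(((j:ℕ) + 1 : ℕ) : ℝ) := by
                rw [hqa0, hmin1]; push_cast; ring
              calc -(((j + 1 : ℕ)) : ℝ) = Qstar (T - j) s0 a0 := this.symm
                _ ≤ _ := Finset.le_sup' _ (Finset.mem_univ a0)
          · have hmin1 : min j (K + 1) = K + 1 := by omega
            have hmin2 : min (j + 1) (K + 1) = K + 1 := by omega
            rw [hmin2]
            apply le_antisymm
            · apply Finset.sup'_le
              intro a _
              by_cases h : a = a0
              · rw [h, hqa0, hmin1]; push_cast; linarith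
              · rw [hqrest a h]; push_cast; linarith
            · have : Qstar (T - j) s0 a1 = -(((K:ℕ) + 1 : ℕ) : ℝ) := by
                rw [hqrest a1 (Ne.symm ha01)]; push_cast; ring
              calc -(((K + 1 : ℕ)) : ℝ) = Qstar (T - j) s0 a1 := this.symm
                _ ≤ _ := Finset.le_sup' _ (Finset.mem_univ a1)
    have hV0s : Vstar 0 s0 = -((K:ℝ) + 1) := by
      have := (hVst (T + 1) le_rfl).2
      simp only [Nat.sub_self] at this
      rw [this]
      have : min (T + 1) (K + 1) = K + 1 := by omega
      rw [this]; push_cast; ring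
    have hG0s : VKg 0 s0 = -((T:ℝ) + 1) := by
      have := hVKg (T + 1) le_rfl
      simp only [Nat.sub_self] at this
      rw [this]; push_cast; ring
    rw [hV0s, hG0s]; ring
end

section
/- Lookahead rewards in the explicit lower-bound instance: let 1 ≤ K and consider the MDP with states S = {B, G}, actions A = {a0, a1}, deterministic transitions p a0 B B = 1, p a1 B G = 1, p a0 G G = 1, p a1 G B = 1, and rewards R(B,a0) = −1, R(B,a1) = −(K+1), R(G,a0) = 0, R(G,a1) = −1. Then for every j ≥ 1: r^j(G,a0) = 0 and r^j(B,a1) = −(K+1); and for every 1 ≤ j ≤ K+1: r^j(B,a0) = −j. In particular, for every 1 ≤ j ≤ K, r^j(B,a0) > r^j(B,a1). -/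
lemma sup'_fin_two (f : Fin 2 → ℝ) :
    Finset.univ.sup' Finset.univ_nonempty f = max (f 0) (f 1) := by
  apply le_antisymm
  · apply Finset.sup'_le
    intro a _
    fin_cases a
    · exact le_max_left _ _
    · exact le_max_right _ _
  · exact max_le (Finset.le_sup' f (Finset.mem_univ 0)) (Finset.le_sup' f (Finset.mem_univ 1))

/-- Lookahead rewards in the explicit lower-bound instance with states
`{B, G} = {0, 1}`, actions `{a0, a1} = {0, 1}`, deterministic transitions
`p a0 B B = 1, p a1 B G = 1, p a0 G G = 1, p a1 G B = 1`, and rewards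
`R(B,a0) = −1, R(B,a1) = −(K+1), R(G,a0) = 0, R(G,a1) = −1`.  Then for every
`j ≥ 1`: `r^j(G,a0) = 0` and `r^j(B,a1) = −(K+1)`; for every `1 ≤ j ≤ K+1`:
`r^j(B,a0) = −j`; in particular, for every `1 ≤ j ≤ K`, `r^j(B,a0) > r^j(B,a1)`. -/
theorem lower_bound_instance_lookahead_rewards
    (K : ℕ) (hK : 1 ≤ K)
    (p : Fin 2 → Fin 2 → Fin 2 → ℝ) (R : Fin 2 → Fin 2 → ℝ)
    (hp_nonneg : ∀ a s s', 0 ≤ p a s s')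
    (hp_sum : ∀ a s, ∑ s', p a s s' = 1)
    -- deterministic transitions (B = 0, G = 1, a0 = 0, a1 = 1)
    (hpBB : p 0 0 0 = 1) (hpBG : p 1 0 1 = 1) (hpGG : p 0 1 1 = 1) (hpGB : p 1 1 0 = 1)
    -- rewards
    (hRB0 : R 0 0 = -1) (hRB1 : R 0 1 = -(K + 1 : ℝ))
    (hRG0 : R 1 0 = 0) (hRG1 : R 1 1 = -1)
    (r : ℕ → Fin 2 → Fin 2 → ℝ)
    -- K-step lookahead reward, by recursion
    (hr_one : ∀ s a, r 1 s a = R s a)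
    (hr_succ : ∀ k, 1 ≤ k → ∀ s a,
      r (k + 1) s a = R s a +
        ∑ s', p a s s' * Finset.univ.sup' Finset.univ_nonempty (fun a' => r k s' a')) :
    (∀ j, 1 ≤ j → r j 1 0 = 0 ∧ r j 0 1 = -(K + 1 : ℝ)) ∧
    (∀ j, 1 ≤ j → j ≤ K + 1 → r j 0 0 = -(j : ℝ)) ∧
    (∀ j, 1 ≤ j → j ≤ K → r j 0 1 < r j 0 0) := by
  -- derive zero transition probabilities
  have h001 : p 0 0 1 = 0 := by have := hp_sum 0 0; rw [Fin.sum_univ_two] at this; linarith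
  have h100 : p 1 0 0 = 0 := by have := hp_sum 1 0; rw [Fin.sum_univ_two] at this; linarith
  have h010 : p 0 1 0 = 0 := by have := hp_sum 0 1; rw [Fin.sum_univ_two] at this; linarith
  have h111 : p 1 1 1 = 0 := by have := hp_sum 1 1; rw [Fin.sum_univ_two] at this; linarith
  -- main invariant, by induction
  have main : ∀ j, 1 ≤ j → r j 1 0 = 0 ∧ r j 1 1 ≤ 0 ∧ r j 0 1 = -(K + 1 : ℝ) ∧
      r j 0 0 ≤ 0 ∧ (j ≤ K + 1 → r j 0 0 = -(j : ℝ)) := by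
    intro j hj
    induction j with
    | zero => omega
    | succ k ih =>
      rcases Nat.eq_or_lt_of_le hj with h1 | h1
      · -- k + 1 = 1
        have hk0 : k = 0 := by omega
        subst hk0
        refine ⟨by rw [hr_one, hRG0], by rw [hr_one, hRG1]; norm_num,
          by rw [hr_one, hRB1], by rw [hr_one, hRB0]; norm_num, ?_⟩
        intro _; rw [hr_one, hRB0]; norm_num
      · have hk : 1 ≤ k := by omega
        obtain ⟨ihG0, ihG1, ihB1, ihB0le, ihB0⟩ := ih hk
        have maxG : Finset.univ.sup' Finset.univ_nonempty (fun a' => r k 1 a') = 0 := by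
          rw [sup'_fin_two]; rw [ihG0]; exact max_eq_left ihG1
        have maxBle : Finset.univ.sup' Finset.univ_nonempty (fun a' => r k 0 a') ≤ 0 := by
          rw [sup'_fin_two]
          refine max_le ihB0le ?_
          rw [ihB1]
          have : (0:ℝ) ≤ (K:ℝ) + 1 := by positivity
          linarith
        have eG0 : r (k+1) 1 0 = 0 := by
          rw [hr_succ k hk, Fin.sum_univ_two, h010, maxG, hpGG, hRG0]; ring
        have eG1 : r (k+1) 1 1 ≤ 0 := by
          rw [hr_succ k hk, Fin.sum_univ_two, h111, hpGB, hRG1]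
          simp only [one_mul, zero_mul, add_zero]
          linarith [maxBle]
        have eB1 : r (k+1) 0 1 = -(K + 1 : ℝ) := by
          rw [hr_succ k hk, Fin.sum_univ_two, h100, hpBG, maxG, hRB1]; ring
        have eB0 : r (k+1) 0 0 = -1 +
            Finset.univ.sup' Finset.univ_nonempty (fun a' => r k 0 a') := by
          rw [hr_succ k hk, Fin.sum_univ_two, h001, hpBB, hRB0]; ring
        refine ⟨eG0, eG1, eB1, by rw [eB0]; linarith [maxBle], ?_⟩
        intro hkle
        have hB0 : r k 0 0 = -(k : ℝ) := ihB0 (by omega)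
        have maxB : Finset.univ.sup' Finset.univ_nonempty (fun a' => r k 0 a') = -(k : ℝ) := by
          rw [sup'_fin_two]; rw [hB0, ihB1]
          apply max_eq_left
          have : (k : ℝ) ≤ K + 1 := by exact_mod_cast Nat.le_of_lt_succ (by omega)
          linarith
        rw [eB0, maxB]; push_cast; ring
  refine ⟨fun j hj => ⟨(main j hj).1, (main j hj).2.2.1⟩,
    fun j hj hle => (main j hj).2.2.2.2 hle, fun j hj hle => ?_⟩
  rw [(main j hj).2.2.1, (main j hj).2.2.2.2 (by omega)]
  have : (j : ℝ) ≤ K := by exact_mod_cast hle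
  linarith
end

section
/- Sample-size threshold inequality: for every real Δ with 0 < Δ ≤ 1/2, setting u = (12/Δ²)·(log(e/Δ⁶) + log(log(1/Δ⁶))), one has u ≥ e and 3·log(u)/u ≤ Δ², i.e. √(3·log(u)/u) ≤ Δ. -/
/-- Sample-size threshold inequality: for every real `Δ` with
`0 < Δ ≤ 1/2`, setting `u = (12/Δ²)·(log(e/Δ⁶) + log(log(1/Δ⁶)))`, one has
`u ≥ e` and `3·log(u)/u ≤ Δ²`, i.e. `√(3·log(u)/u) ≤ Δ`. -/
theorem sample_size_threshold_inequality
    (Δ : ℝ) (hΔ0 : 0 < Δ) (hΔ : Δ ≤ 1 / 2)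
    (u : ℝ)
    (hu : u = (12 / Δ ^ 2) *
      (Real.log (Real.exp 1 / Δ ^ 6) + Real.log (Real.log (1 / Δ ^ 6)))) :
    Real.exp 1 ≤ u ∧ 3 * Real.log u / u ≤ Δ ^ 2 ∧
      Real.sqrt (3 * Real.log u / u) ≤ Δ := by
  have hΔ6 : (0:ℝ) < Δ ^ 6 := by positivity
  have hΔ2 : (0:ℝ) < Δ ^ 2 := by positivity
  set L : ℝ := Real.log (1 / Δ ^ 6) with hLdef
  have hLval : L = -(6 * Real.log Δ) := by
    rw [hLdef, one_div, Real.log_inv, Real.log_pow]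
    push_cast; ring
  -- L ≥ 4
  have hlog2 : (0.6931471803 : ℝ) < Real.log 2 := Real.log_two_gt_d9
  have hlogΔ : Real.log Δ ≤ Real.log (1/2) := Real.log_le_log hΔ0 hΔ
  have hlog_half : Real.log (1/2 : ℝ) = -Real.log 2 := by
    rw [one_div, Real.log_inv]
  have hL4 : (4:ℝ) ≤ L := by
    rw [hLval]; rw [hlog_half] at hlogΔ; nlinarith
  have hlogL : (0:ℝ) ≤ Real.log L := Real.log_nonneg (by linarith)
  set S : ℝ := 1 + L + Real.log L with hSdef
  have hS5 : (5:ℝ) ≤ S := by rw [hSdef]; linarith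
  have hSpos : (0:ℝ) < S := by linarith
  set A : ℝ := 12 / Δ ^ 2 with hAdef
  have hΔ2q : Δ ^ 2 ≤ 1/4 := by nlinarith
  have hA48 : (48:ℝ) ≤ A := by
    rw [hAdef, le_div_iff₀ hΔ2]; nlinarith
  have hApos : (0:ℝ) < A := by linarith
  -- u = A * S
  have huAS : u = A * S := by
    rw [hu, hAdef, hSdef]
    congr 1
    rw [Real.log_div (Real.exp_ne_zero 1) (ne_of_gt hΔ6), Real.log_exp]
    have : L = -Real.log (Δ ^ 6) := by rw [hLdef, one_div, Real.log_inv]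
    linarith [this]
  have hupos : (0:ℝ) < u := by rw [huAS]; positivity
  have hu240 : (240:ℝ) ≤ u := by rw [huAS]; nlinarith
  have hexp1 : Real.exp 1 ≤ u := by
    have := Real.exp_one_lt_d9
    linarith
  -- log A = log 12 + L/3
  have hlogA : Real.log A = Real.log 12 + L / 3 := by
    rw [hAdef, Real.log_div (by norm_num) (ne_of_gt hΔ2), Real.log_pow, hLval]
    push_cast; ring
  have hlog12 : Real.log 12 ≤ 3 := by
    have h16 : Real.log 12 ≤ Real.log 16 := Real.log_le_log (by norm_num) (by norm_num)
    have : Real.log 16 = 4 * Real.log 2 := by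
      rw [show (16:ℝ) = 2 ^ 4 by norm_num, Real.log_pow]; push_cast; ring
    have hlog2' : Real.log 2 < 0.6931471808 := Real.log_two_lt_d9
    nlinarith
  have hlogS : Real.log S ≤ S - 1 := Real.log_le_sub_one_of_pos hSpos
  have hlogu : Real.log u ≤ 4 * S := by
    rw [huAS, Real.log_mul (ne_of_gt hApos) (ne_of_gt hSpos), hlogA]
    have : S = 1 + L + Real.log L := hSdef
    linarith
  have hkey : 3 * Real.log u ≤ Δ ^ 2 * u := by
    have h12 : Δ ^ 2 * A = 12 := by
      rw [hAdef]; field_simp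
    have : Δ ^ 2 * u = 12 * S := by rw [huAS, ← mul_assoc, h12]
    rw [this]; linarith
  have h2 : 3 * Real.log u / u ≤ Δ ^ 2 := by
    rw [div_le_iff₀ hupos]; linarith [hkey]
  refine ⟨hexp1, h2, ?_⟩
  calc Real.sqrt (3 * Real.log u / u) ≤ Real.sqrt (Δ ^ 2) := Real.sqrt_le_sqrt h2
    _ = Δ := by rw [Real.sqrt_sq hΔ0.le]
end

section
/- Regret (performance-difference) decomposition: consider the finite-horizon interaction model with horizon T, initial state s₀, and two history-dependent policies π = (π_t) and π' = (π'_t). For 0 ≤ t ≤ T and a history H_{t+1} ∈ 𝓗_{t+1}, let W^{π'}_{t+1}(H_{t+1}) denote the expected value of ∑_{k=t+1}^T c_k(s_k,a_k) when the interaction continues from H_{t+1} using π' (defined by backward recursion over the kernels; W^{π'}_{T+1} = 0). For a history H_t with current state s_t, define the per-step regret Regret_t(H_t) = E_{a∼π_t(H_t)}[c_t(s_t,a) + E_{r∼ρ_t(s_t,a), s'∼P(s_t,a)}[W^{π'}_{t+1}(H_t,a,r,s')]] − E_{a∼π'_t(H_t)}[c_t(s_t,a) + E_{r∼ρ_t(s_t,a),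 s'∼P(s_t,a)}[W^{π'}_{t+1}(H_t,a,r,s')]]. Then the cumulative difference satisfies E_π[∑_{t=0}^T c_t(s_t,a_t)] − E_{π'}[∑_{t=0}^T c_t(s_t,a_t)] = ∑_{t=0}^T E_{H_t∼π}[Regret_t(H_t)], where E_π denotes expectation over trajectories generated from s₀ by π, and H_t∼π denotes the law of the length-t history under π. -/
/-! STATEMENT 14: Regret (performance-difference) decomposition for the
finite-horizon interaction model with history-dependent policies. -/

/-- A history: the list of past `(state, action, reward)` triples (oldest first),
together with the current state. -/
abbrev Hist (S A : Type) : Type := List (S × A × ℝ) × S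

/-- Expectation of a real-valued function under a probability mass function. -/
noncomputable def pmfExp {α : Type} (q : PMF α) (f : α → ℝ) : ℝ :=
  ∑' x, (q x).toReal * f x

/-- The law of the length-`t` history generated from the initial state `s₀` by the
history-dependent policy `π`, with transition kernel `P` and reward-observation
kernels `ρ`. -/
noncomputable def histLaw {S A : Type} (P : S → A → PMF S) (ρ : ℕ → S → A → PMF ℝ)
    (π : ℕ → Hist S A → PMF A) (s₀ : S) : ℕ → PMF (Hist S A)
  | 0 => PMF.pure ([], s₀)
  | t + 1 => (histLaw P ρ π s₀ t).bind fun H =>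
      (π t H).bind fun a =>
        (ρ t H.2 a).bind fun r =>
          (P H.2 a).map fun s' => (H.1 ++ [(H.2, a, r)], s')

/-- The cumulative cost `∑_t c_t(s_t, a_t)` along a recorded list of
`(state, action, reward)` triples, starting the time count at `t`. -/
def costSum {S A : Type} (c : ℕ → S → A → ℝ) : ℕ → List (S × A × ℝ) → ℝ
  | _, [] => 0
  | t, (s, a, _) :: rest => c t s a + costSum c (t + 1) rest

/-- `futureW P ρ c π' n H` is `W^{π'}_{t}(H)`, the expected value of
`∑_{k=t}^{T} c_k(s_k,a_k)` when the interaction continues from the history `H`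
(of length `t = T + 1 − n`, i.e. with `n` decision steps remaining) using the
policy `π'`; it is defined by backward recursion with `W^{π'}_{T+1} = 0`. -/
noncomputable def futureW {S A : Type} (P : S → A → PMF S) (ρ : ℕ → S → A → PMF ℝ)
    (c : ℕ → S → A → ℝ) (π' : ℕ → Hist S A → PMF A) : ℕ → Hist S A → ℝ
  | 0, _ => 0
  | n + 1, H =>
      pmfExp (π' H.1.length H) fun a =>
        c H.1.length H.2 a +
          pmfExp (ρ H.1.length H.2 a) fun r =>
            pmfExp (P H.2 a) fun s' =>
              futureW P ρ c π' n (H.1 ++ [(H.2, a, r)], s')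

/-- The per-step regret `Regret_t(H_t)` of policy `π` against policy `π'` at a
history `H` of length `t`, for horizon `T`:  the difference of
`E_{a}[c_t(s_t,a) + E_{r,s'}[W^{π'}_{t+1}(H,a,r,s')]]` when `a` is drawn from
`π_t(H)` versus from `π'_t(H)`. -/
noncomputable def stepRegret {S A : Type} (P : S → A → PMF S) (ρ : ℕ → S → A → PMF ℝ)
    (c : ℕ → S → A → ℝ) (π π' : ℕ → Hist S A → PMF A) (T t : ℕ) (H : Hist S A) : ℝ :=
  (pmfExp (π t H) fun a =>
      c t H.2 a +
        pmfExp (ρ t H.2 a) fun r =>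
          pmfExp (P H.2 a) fun s' =>
            futureW P ρ c π' (T - t) (H.1 ++ [(H.2, a, r)], s')) -
  (pmfExp (π' t H) fun a =>
      c t H.2 a +
        pmfExp (ρ t H.2 a) fun r =>
          pmfExp (P H.2 a) fun s' =>
            futureW P ρ c π' (T - t) (H.1 ++ [(H.2, a, r)], s'))

namespace RegretAux

variable {α β : Type}

lemma summable_toReal (q : PMF α) : Summable fun y => (q y).toReal :=
  ENNReal.summable_toReal (by simp [q.tsum_coe])

lemma summable_mul (q : PMF α) {g : α → ℝ} {C : ℝ}
    (hg : ∀ y, q y ≠ 0 → |g y| ≤ C) :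
    Summable fun y => (q y).toReal * g y := by
  apply Summable.of_abs
  refine Summable.of_nonneg_of_le (fun y => abs_nonneg _) (fun y => ?_)
    ((summable_toReal q).mul_right C)
  by_cases hy : q y = 0
  · simp [hy]
  · rw [abs_mul, abs_of_nonneg ENNReal.toReal_nonneg]
    exact mul_le_mul_of_nonneg_left (hg y hy) ENNReal.toReal_nonneg

lemma pmfExp_congr (q : PMF α) {g g' : α → ℝ} (h : ∀ y, q y ≠ 0 → g y = g' y) :
    pmfExp q g = pmfExp q g' := by
  unfold pmfExp
  refine tsum_congr fun y => ?_
  by_cases hy : q y = 0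
  · simp [hy]
  · rw [h y hy]

lemma tsum_toReal_one (q : PMF α) : ∑' y, (q y).toReal = 1 := by
  rw [← ENNReal.tsum_toReal_eq fun a => q.apply_ne_top a, q.tsum_coe, ENNReal.toReal_one]

lemma pmfExp_const (q : PMF α) (C : ℝ) : pmfExp q (fun _ => C) = C := by
  unfold pmfExp
  rw [tsum_mul_right, tsum_toReal_one, one_mul]

lemma pmfExp_nonneg (q : PMF α) {g : α → ℝ} (hg : ∀ y, 0 ≤ g y) :
    0 ≤ pmfExp q g :=
  tsum_nonneg fun y => mul_nonneg ENNReal.toReal_nonneg (hg y)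

lemma abs_pmfExp_le (q : PMF α) {g : α → ℝ} {C : ℝ}
    (hg : ∀ y, q y ≠ 0 → |g y| ≤ C) : |pmfExp q g| ≤ C := by
  have hs := summable_mul q hg
  have hs' : Summable fun y => (q y).toReal * |g y| :=
    hs.abs.congr fun y => by rw [abs_mul, abs_of_nonneg ENNReal.toReal_nonneg]
  have habs : |pmfExp q g| ≤ ∑' y, (q y).toReal * |g y| := by
    have h' : Summable fun y => ‖(q y).toReal * g y‖ :=
      hs.abs.congr fun y => (Real.norm_eq_abs _).symm
    have := norm_tsum_le_tsum_norm h'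
    rw [Real.norm_eq_abs] at this
    refine this.trans (le_of_eq (tsum_congr fun y => ?_))
    rw [Real.norm_eq_abs, abs_mul, abs_of_nonneg ENNReal.toReal_nonneg]
  refine habs.trans ?_
  calc ∑' y, (q y).toReal * |g y| ≤ ∑' y, (q y).toReal * C := by
        refine Summable.tsum_le_tsum (fun y => ?_) hs' ((summable_toReal q).mul_right C)
        by_cases hy : q y = 0
        · simp [hy]
        · exact mul_le_mul_of_nonneg_left (hg y hy) ENNReal.toReal_nonneg
    _ = C := by rw [tsum_mul_right, tsum_toReal_one, one_mul]

lemma pmfExp_add (q : PMF α) {g₁ g₂ : α → ℝ} {C₁ C₂ : ℝ}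
    (h₁ : ∀ y, q y ≠ 0 → |g₁ y| ≤ C₁) (h₂ : ∀ y, q y ≠ 0 → |g₂ y| ≤ C₂) :
    pmfExp q (fun y => g₁ y + g₂ y) = pmfExp q g₁ + pmfExp q g₂ := by
  unfold pmfExp
  rw [← Summable.tsum_add (summable_mul q h₁) (summable_mul q h₂)]
  exact tsum_congr fun y => by ring

lemma pmfExp_eq_toReal (q : PMF α) {g : α → ℝ} (hg : ∀ y, 0 ≤ g y) :
    pmfExp q g = (∑' y, q y * ENNReal.ofReal (g y)).toReal := by
  rw [ENNReal.tsum_toReal_eq fun y =>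
    ENNReal.mul_ne_top (q.apply_ne_top y) ENNReal.ofReal_ne_top]
  exact tsum_congr fun y => by
    rw [ENNReal.toReal_mul, ENNReal.toReal_ofReal (hg y)]

lemma pmfExp_pure (x : α) (g : α → ℝ) : pmfExp (PMF.pure x) g = g x := by
  unfold pmfExp
  rw [tsum_eq_single x]
  · simp
  · intro y hy; simp [PMF.pure_apply, hy]

lemma pmfExp_bind_nonneg (p : PMF α) (f : α → PMF β) {g : β → ℝ} {C : ℝ}
    (hg0 : ∀ y, 0 ≤ g y) (hgC : ∀ y, g y ≤ C) :
    pmfExp (p.bind f) g = pmfExp p fun x => pmfExp (f x) g := by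
  have hinner_ne_top : ∀ x : α, (∑' y, (f x) y * ENNReal.ofReal (g y)) ≠ ⊤ := by
    intro x
    refine ne_top_of_le_ne_top (b := ENNReal.ofReal C) ?_ ?_
    · exact ENNReal.ofReal_ne_top
    · calc (∑' y, (f x) y * ENNReal.ofReal (g y))
          ≤ ∑' y, (f x) y * ENNReal.ofReal C :=
            ENNReal.tsum_le_tsum fun y =>
              mul_le_mul_right (ENNReal.ofReal_le_ofReal (hgC y)) _
        _ = ENNReal.ofReal C := by rw [ENNReal.tsum_mul_right, (f x).tsum_coe, one_mul]
  rw [pmfExp_eq_toReal _ hg0]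
  have key : (∑' y, (p.bind f) y * ENNReal.ofReal (g y))
      = ∑' x, p x * ∑' y, (f x) y * ENNReal.ofReal (g y) := by
    calc (∑' y, (p.bind f) y * ENNReal.ofReal (g y))
        = ∑' y, (∑' x, p x * (f x) y) * ENNReal.ofReal (g y) := by
          exact tsum_congr fun y => by rw [PMF.bind_apply]
      _ = ∑' y, ∑' x, p x * (f x) y * ENNReal.ofReal (g y) := by
          exact tsum_congr fun y => ENNReal.tsum_mul_right.symm
      _ = ∑' x, ∑' y, p x * (f x) y * ENNReal.ofReal (g y) := ENNReal.tsum_comm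
      _ = ∑' x, p x * ∑' y, (f x) y * ENNReal.ofReal (g y) := by
          exact tsum_congr fun x => by
            rw [← ENNReal.tsum_mul_left]
            exact tsum_congr fun y => by ring
  rw [key]
  have houter : ∀ x, 0 ≤ pmfExp (f x) g := fun x => pmfExp_nonneg _ hg0
  rw [pmfExp_eq_toReal p houter]
  congr 1
  refine tsum_congr fun x => ?_
  congr 1
  rw [pmfExp_eq_toReal _ hg0, ENNReal.ofReal_toReal (hinner_ne_top x)]

lemma pmfExp_bind (p : PMF α) (f : α → PMF β) {g : β → ℝ} {C : ℝ}
    (hg : ∀ y, |g y| ≤ C) :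
    pmfExp (p.bind f) g = pmfExp p fun x => pmfExp (f x) g := by
  obtain ⟨y₀, _⟩ := (p.bind f).support_nonempty
  have hC : 0 ≤ C := (abs_nonneg _).trans (hg y₀)
  have hg0 : ∀ y, 0 ≤ g y + C := fun y => by
    have := (abs_le.mp (hg y)).1; linarith
  have hgC : ∀ y, g y + C ≤ C + C := fun y => by
    have := (abs_le.mp (hg y)).2; linarith
  have hkey := pmfExp_bind_nonneg p f hg0 hgC
  have hsplit : ∀ q : PMF β, pmfExp q (fun y => g y + C) = pmfExp q g + C := by
    intro q
    rw [pmfExp_add q (C₁ := C) (C₂ := C) (fun y _ => hg y)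
      (fun y _ => by rw [abs_of_nonneg hC]), pmfExp_const]
  rw [hsplit] at hkey
  have hb : ∀ x, |pmfExp (f x) g| ≤ C := fun x => abs_pmfExp_le _ (fun y _ => hg y)
  have : pmfExp p (fun x => pmfExp (f x) (fun y => g y + C))
      = pmfExp p (fun x => pmfExp (f x) g) + C := by
    rw [pmfExp_congr p (g' := fun x => pmfExp (f x) g + C) (fun x _ => hsplit (f x)),
      pmfExp_add p (C₁ := C) (C₂ := C) (fun x _ => hb x)
        (fun x _ => by rw [abs_of_nonneg hC]), pmfExp_const]
  rw [this] at hkey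
  linarith

lemma pmfExp_map (p : PMF α) (h : α → β) {g : β → ℝ} {C : ℝ}
    (hg : ∀ y, |g y| ≤ C) :
    pmfExp (p.map h) g = pmfExp p fun x => g (h x) := by
  show pmfExp (p.bind fun x => PMF.pure (h x)) g = _
  rw [pmfExp_bind p _ hg]
  exact pmfExp_congr p fun x _ => pmfExp_pure (h x) g

end RegretAux

namespace RegretAux

variable {S A : Type} [Fintype S] [Fintype A]

/-- Crude uniform bound on `|c t s a|`. -/
noncomputable def Mb (c : ℕ → S → A → ℝ) (t : ℕ) : ℝ := ∑ s : S, ∑ a : A, |c t s a|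

noncomputable def Bb (c : ℕ → S → A → ℝ) (t n : ℕ) : ℝ :=
  ∑ k ∈ Finset.range n, Mb c (t + k)

lemma Mb_nonneg (c : ℕ → S → A → ℝ) (t : ℕ) : 0 ≤ Mb c t :=
  Finset.sum_nonneg fun _ _ => Finset.sum_nonneg fun _ _ => abs_nonneg _

lemma abs_c_le_Mb (c : ℕ → S → A → ℝ) (t : ℕ) (s : S) (a : A) : |c t s a| ≤ Mb c t := by
  have h1 : |c t s a| ≤ ∑ a' : A, |c t s a'| :=
    Finset.single_le_sum (f := fun a' => |c t s a'|)
      (fun _ _ => abs_nonneg _) (Finset.mem_univ a)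
  refine h1.trans ?_
  exact Finset.single_le_sum (f := fun s' => ∑ a' : A, |c t s' a'|)
    (fun s' _ => Finset.sum_nonneg fun _ _ => abs_nonneg _) (Finset.mem_univ s)

lemma Bb_nonneg (c : ℕ → S → A → ℝ) (t n : ℕ) : 0 ≤ Bb c t n :=
  Finset.sum_nonneg fun _ _ => Mb_nonneg c _

lemma Bb_succ (c : ℕ → S → A → ℝ) (t n : ℕ) :
    Bb c t (n + 1) = Mb c t + Bb c (t + 1) n := by
  unfold Bb
  rw [Finset.sum_range_succ']
  have : ∀ k, Mb c (t + (k + 1)) = Mb c (t + 1 + k) := fun k => by ring_nf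
  simp only [this]
  exact add_comm _ _

lemma costSum_append (c : ℕ → S → A → ℝ) (s : S) (a : A) (r : ℝ) :
    ∀ (l : List (S × A × ℝ)) (t : ℕ),
      costSum c t (l ++ [(s, a, r)]) = costSum c t l + c (t + l.length) s a := by
  intro l
  induction l with
  | nil => intro t; simp [costSum]
  | cons hd tl ih =>
      intro t
      obtain ⟨s', a', r'⟩ := hd
      show c t s' a' + costSum c (t + 1) (tl ++ [(s, a, r)])
        = c t s' a' + costSum c (t + 1) tl + c (t + (tl.length + 1)) s a
      rw [ih (t + 1)]
      have harg : t + 1 + tl.length = t + (tl.length + 1) := by omega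
      rw [harg, add_assoc]

lemma abs_costSum_le (c : ℕ → S → A → ℝ) :
    ∀ (l : List (S × A × ℝ)) (t : ℕ), |costSum c t l| ≤ Bb c t l.length := by
  intro l
  induction l with
  | nil => intro t; simp [costSum, Bb]
  | cons hd tl ih =>
      intro t
      obtain ⟨s, a, r⟩ := hd
      simp only [costSum, List.length_cons]
      rw [Bb_succ]
      exact (abs_add_le _ _).trans (add_le_add (abs_c_le_Mb c t s a) (ih (t + 1)))

lemma abs_futureW_le (P : S → A → PMF S) (ρ : ℕ → S → A → PMF ℝ)
    (c : ℕ → S → A → ℝ) (π' : ℕ → Hist S A → PMF A) :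
    ∀ (n : ℕ) (H : Hist S A), |futureW P ρ c π' n H| ≤ Bb c H.1.length n := by
  intro n
  induction n with
  | zero => intro H; simp [futureW, Bb]
  | succ n ih =>
      intro H
      have hlen : ∀ a r (s' : S), ((H.1 ++ [(H.2, a, r)], s') : Hist S A).1.length
          = H.1.length + 1 := by simp
      rw [show futureW P ρ c π' (n + 1) H = pmfExp (π' H.1.length H) fun a =>
            c H.1.length H.2 a + pmfExp (ρ H.1.length H.2 a) fun r =>
              pmfExp (P H.2 a) fun s' =>
                futureW P ρ c π' n (H.1 ++ [(H.2, a, r)], s') from rfl,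
          Bb_succ]
      refine abs_pmfExp_le _ fun a _ => ?_
      refine (abs_add_le _ _).trans (add_le_add (abs_c_le_Mb c _ _ _) ?_)
      refine abs_pmfExp_le _ fun r _ => ?_
      refine abs_pmfExp_le _ fun s' _ => ?_
      have := ih (H.1 ++ [(H.2, a, r)], s')
      rwa [hlen a r s'] at this

lemma histLaw_length (P : S → A → PMF S) (ρ : ℕ → S → A → PMF ℝ)
    (σ : ℕ → Hist S A → PMF A) (s₀ : S) :
    ∀ (t : ℕ) (H : Hist S A), (histLaw P ρ σ s₀ t) H ≠ 0 → H.1.length = t := by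
  intro t
  induction t with
  | zero =>
      intro H hH
      rw [← PMF.mem_support_iff] at hH
      simp only [histLaw, PMF.support_pure, Set.mem_singleton_iff] at hH
      subst hH; rfl
  | succ t ih =>
      intro H hH
      rw [← PMF.mem_support_iff] at hH
      simp only [histLaw, PMF.mem_support_bind_iff, PMF.mem_support_map_iff] at hH
      obtain ⟨H₀, hH₀, a, ha, r, hr, s', hs', hEq⟩ := hH
      have hlen := ih H₀ (PMF.mem_support_iff _ _ |>.mp hH₀)
      subst hEq
      simp [hlen]

end RegretAux



namespace RegretAux

variable {S A : Type} [Fintype S] [Fintype A]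

/-- The one-step "Q-value" of policy `σ` at history `H` (length `t`),
continuing with `π'` afterwards. -/
noncomputable def stepVal (P : S → A → PMF S) (ρ : ℕ → S → A → PMF ℝ)
    (c : ℕ → S → A → ℝ) (π' σ : ℕ → Hist S A → PMF A) (T t : ℕ) (H : Hist S A) : ℝ :=
  pmfExp (σ t H) fun a =>
    c t H.2 a +
      pmfExp (ρ t H.2 a) fun r =>
        pmfExp (P H.2 a) fun s' =>
          futureW P ρ c π' (T - t) (H.1 ++ [(H.2, a, r)], s')

lemma stepRegret_eq (P : S → A → PMF S) (ρ : ℕ → S → A → PMF ℝ)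
    (c : ℕ → S → A → ℝ) (σ π' : ℕ → Hist S A → PMF A) (T t : ℕ) (H : Hist S A) :
    stepRegret P ρ c σ π' T t H
      = stepVal P ρ c π' σ T t H - stepVal P ρ c π' π' T t H := rfl

lemma abs_stepVal_le (P : S → A → PMF S) (ρ : ℕ → S → A → PMF ℝ)
    (c : ℕ → S → A → ℝ) (π' σ : ℕ → Hist S A → PMF A) (T t : ℕ) (H : Hist S A)
    (hlen : H.1.length = t) :
    |stepVal P ρ c π' σ T t H| ≤ Mb c t + Bb c (t + 1) (T - t) := by
  refine abs_pmfExp_le _ fun a _ => ?_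
  refine (abs_add_le _ _).trans (add_le_add (abs_c_le_Mb c _ _ _) ?_)
  refine abs_pmfExp_le _ fun r _ => ?_
  refine abs_pmfExp_le _ fun s' _ => ?_
  have h := abs_futureW_le P ρ c π' (T - t) (H.1 ++ [(H.2, a, r)], s')
  simpa [hlen] using h

lemma futureW_eq_stepVal (P : S → A → PMF S) (ρ : ℕ → S → A → PMF ℝ)
    (c : ℕ → S → A → ℝ) (π' : ℕ → Hist S A → PMF A) (T t : ℕ) (ht : t ≤ T)
    (H : Hist S A) (hlen : H.1.length = t) :
    futureW P ρ c π' (T + 1 - t) H = stepVal P ρ c π' π' T t H := by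
  rw [show T + 1 - t = (T - t) + 1 from by omega]
  show (pmfExp (π' H.1.length H) fun a =>
      c H.1.length H.2 a +
        pmfExp (ρ H.1.length H.2 a) fun r =>
          pmfExp (P H.2 a) fun s' =>
            futureW P ρ c π' (T - t) (H.1 ++ [(H.2, a, r)], s')) = _
  rw [hlen]
  rfl

lemma step (P : S → A → PMF S) (ρ : ℕ → S → A → PMF ℝ) (c : ℕ → S → A → ℝ)
    (π' σ : ℕ → Hist S A → PMF A) (s₀ : S) (T t : ℕ) (ht : t ≤ T) :
    pmfExp (histLaw P ρ σ s₀ (t + 1))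
        (fun H => costSum c 0 H.1 + futureW P ρ c π' (T - t) H)
      = pmfExp (histLaw P ρ σ s₀ t)
          (fun H => costSum c 0 H.1 + futureW P ρ c π' (T + 1 - t) H)
        + pmfExp (histLaw P ρ σ s₀ t) (stepRegret P ρ c σ π' T t) := by
  set C1 : ℝ := Bb c 0 (t + 1) + Bb c (t + 1) (T - t) with hC1
  set gtr : Hist S A → ℝ := fun H =>
    if H.1.length = t + 1 then costSum c 0 H.1 + futureW P ρ c π' (T - t) H else 0
    with hgtrdef
  have hC1nn : 0 ≤ C1 := add_nonneg (Bb_nonneg c _ _) (Bb_nonneg c _ _)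
  have hgtr : ∀ H, |gtr H| ≤ C1 := by
    intro H
    by_cases h : H.1.length = t + 1
    · simp only [hgtrdef, if_pos h]
      refine (abs_add_le _ _).trans (add_le_add ?_ ?_)
      · have := abs_costSum_le c H.1 0
        rwa [h] at this
      · have := abs_futureW_le P ρ c π' (T - t) H
        rwa [h] at this
    · simp only [hgtrdef, if_neg h, abs_zero]
      exact hC1nn
  -- rewrite LHS with truncation
  have hL1 : pmfExp (histLaw P ρ σ s₀ (t + 1))
      (fun H => costSum c 0 H.1 + futureW P ρ c π' (T - t) H)
      = pmfExp (histLaw P ρ σ s₀ (t + 1)) gtr := by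
    refine pmfExp_congr _ fun H hH => ?_
    have hlen := histLaw_length P ρ σ s₀ (t + 1) H hH
    simp only [hgtrdef, if_pos hlen]
  rw [hL1]
  rw [show histLaw P ρ σ s₀ (t + 1)
      = (histLaw P ρ σ s₀ t).bind fun H =>
          (σ t H).bind fun a =>
            (ρ t H.2 a).bind fun r =>
              (P H.2 a).map fun s' => (H.1 ++ [(H.2, a, r)], s') from rfl]
  rw [pmfExp_bind _ _ hgtr]
  have hBnn : (0:ℝ) ≤ Bb c (t + 1) (T - t) := Bb_nonneg c _ _
  have hpoint : ∀ H : Hist S A, (histLaw P ρ σ s₀ t) H ≠ 0 →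
      pmfExp ((σ t H).bind fun a =>
          (ρ t H.2 a).bind fun r =>
            (P H.2 a).map fun s' => (H.1 ++ [(H.2, a, r)], s')) gtr
      = costSum c 0 H.1 + stepVal P ρ c π' σ T t H := by
    intro H hH
    have hlen := histLaw_length P ρ σ s₀ t H hH
    rw [pmfExp_bind _ _ hgtr]
    have ha : ∀ a : A,
        pmfExp ((ρ t H.2 a).bind fun r =>
            (P H.2 a).map fun s' => (H.1 ++ [(H.2, a, r)], s')) gtr
        = costSum c 0 H.1 + (c t H.2 a +
            pmfExp (ρ t H.2 a) fun r =>
              pmfExp (P H.2 a) fun s' =>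
                futureW P ρ c π' (T - t) (H.1 ++ [(H.2, a, r)], s')) := by
      intro a
      rw [pmfExp_bind _ _ hgtr]
      have hr : ∀ r : ℝ,
          pmfExp ((P H.2 a).map fun s' => (H.1 ++ [(H.2, a, r)], s')) gtr
          = (costSum c 0 H.1 + c t H.2 a) +
              pmfExp (P H.2 a) fun s' =>
                futureW P ρ c π' (T - t) (H.1 ++ [(H.2, a, r)], s') := by
        intro r
        rw [pmfExp_map _ _ hgtr]
        have hs : ∀ s' : S,
            gtr (H.1 ++ [(H.2, a, r)], s')
            = (costSum c 0 H.1 + c t H.2 a) +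
                futureW P ρ c π' (T - t) (H.1 ++ [(H.2, a, r)], s') := by
          intro s'
          have hlen' : ((H.1 ++ [(H.2, a, r)], s') : Hist S A).1.length = t + 1 := by
            simp [hlen]
          simp only [hgtrdef, if_pos hlen']
          rw [show costSum c 0 (H.1 ++ [(H.2, a, r)])
              = costSum c 0 H.1 + c (0 + H.1.length) H.2 a from
                costSum_append c H.2 a r H.1 0, hlen]
          ring_nf
        rw [pmfExp_congr _ fun s' _ => hs s']
        rw [pmfExp_add _ (C₁ := |costSum c 0 H.1 + c t H.2 a|)
            (C₂ := Bb c (t + 1) (T - t)) (fun s' _ => le_refl _)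
            (fun s' _ => by
              have := abs_futureW_le P ρ c π' (T - t) (H.1 ++ [(H.2, a, r)], s')
              simpa [hlen] using this),
          pmfExp_const]
      rw [pmfExp_congr _ fun r _ => hr r]
      rw [pmfExp_add _ (C₁ := |costSum c 0 H.1 + c t H.2 a|)
          (C₂ := Bb c (t + 1) (T - t)) (fun r _ => le_refl _)
          (fun r _ => abs_pmfExp_le _ fun s' _ => by
            have := abs_futureW_le P ρ c π' (T - t) (H.1 ++ [(H.2, a, r)], s')
            simpa [hlen] using this),
        pmfExp_const]
      ring
    rw [pmfExp_congr _ fun a _ => ha a]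
    rw [pmfExp_add _ (C₁ := |costSum c 0 H.1|)
        (C₂ := Mb c t + Bb c (t + 1) (T - t)) (fun a _ => le_refl _)
        (fun a _ => by
          refine (abs_add_le _ _).trans (add_le_add (abs_c_le_Mb c _ _ _) ?_)
          refine abs_pmfExp_le _ fun r _ => ?_
          refine abs_pmfExp_le _ fun s' _ => ?_
          have := abs_futureW_le P ρ c π' (T - t) (H.1 ++ [(H.2, a, r)], s')
          simpa [hlen] using this),
      pmfExp_const]
    rfl
  rw [pmfExp_congr _ hpoint]
  -- rewrite the first RHS term
  have hR1 : pmfExp (histLaw P ρ σ s₀ t)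
      (fun H => costSum c 0 H.1 + futureW P ρ c π' (T + 1 - t) H)
      = pmfExp (histLaw P ρ σ s₀ t)
          (fun H => costSum c 0 H.1 + stepVal P ρ c π' π' T t H) := by
    refine pmfExp_congr _ fun H hH => ?_
    have hlen := histLaw_length P ρ σ s₀ t H hH
    rw [futureW_eq_stepVal P ρ c π' T t ht H hlen]
  rw [hR1]
  -- final additivity
  have hcs : ∀ H : Hist S A, (histLaw P ρ σ s₀ t) H ≠ 0 →
      |costSum c 0 H.1 + stepVal P ρ c π' π' T t H|
        ≤ Bb c 0 t + (Mb c t + Bb c (t + 1) (T - t)) := by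
    intro H hH
    have hlen := histLaw_length P ρ σ s₀ t H hH
    refine (abs_add_le _ _).trans (add_le_add ?_ (abs_stepVal_le P ρ c π' π' T t H hlen))
    have := abs_costSum_le c H.1 0
    rwa [hlen] at this
  have hreg : ∀ H : Hist S A, (histLaw P ρ σ s₀ t) H ≠ 0 →
      |stepRegret P ρ c σ π' T t H|
        ≤ (Mb c t + Bb c (t + 1) (T - t)) + (Mb c t + Bb c (t + 1) (T - t)) := by
    intro H hH
    have hlen := histLaw_length P ρ σ s₀ t H hH
    rw [stepRegret_eq]
    exact (abs_sub _ _).trans (add_le_add (abs_stepVal_le P ρ c π' σ T t H hlen)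
      (abs_stepVal_le P ρ c π' π' T t H hlen))
  rw [← pmfExp_add _ hcs hreg]
  refine pmfExp_congr _ fun H hH => ?_
  rw [stepRegret_eq]
  ring

end RegretAux


namespace RegretAux

variable {S A : Type} [Fintype S] [Fintype A]

lemma telescope (P : S → A → PMF S) (ρ : ℕ → S → A → PMF ℝ) (c : ℕ → S → A → ℝ)
    (π' σ : ℕ → Hist S A → PMF A) (s₀ : S) (T : ℕ) :
    ∀ u, u ≤ T + 1 →
      pmfExp (histLaw P ρ σ s₀ u)
          (fun H => costSum c 0 H.1 + futureW P ρ c π' (T + 1 - u) H)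
        = futureW P ρ c π' (T + 1) ([], s₀)
          + ∑ t ∈ Finset.range u, pmfExp (histLaw P ρ σ s₀ t) (stepRegret P ρ c σ π' T t) := by
  intro u
  induction u with
  | zero =>
      intro _
      simp only [Nat.sub_zero, Finset.range_zero, Finset.sum_empty, add_zero]
      rw [show histLaw P ρ σ s₀ 0 = PMF.pure ([], s₀) from rfl, pmfExp_pure]
      show costSum c 0 [] + futureW P ρ c π' (T + 1) ([], s₀) = _
      rw [show costSum c 0 ([] : List (S × A × ℝ)) = 0 from rfl, zero_add]
  | succ u ih =>
      intro hu
      have hu' : u ≤ T := by omega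
      rw [show T + 1 - (u + 1) = T - u from by omega]
      rw [step P ρ c π' σ s₀ T u hu', ih (by omega), Finset.sum_range_succ]
      ring

end RegretAux

/-- Regret decomposition:
`E_π[∑_{t=0}^T c_t(s_t,a_t)] − E_{π'}[∑_{t=0}^T c_t(s_t,a_t)]
  = ∑_{t=0}^T E_{H_t ∼ π}[Regret_t(H_t)]`. -/
theorem regret_decomposition
    {S A : Type} [Fintype S] [Fintype A] [Nonempty S] [Nonempty A]
    (P : S → A → PMF S) (ρ : ℕ → S → A → PMF ℝ)
    (c : ℕ → S → A → ℝ) (s₀ : S) (T : ℕ)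
    (π π' : ℕ → Hist S A → PMF A) :
    pmfExp (histLaw P ρ π s₀ (T + 1)) (fun H => costSum c 0 H.1) -
        pmfExp (histLaw P ρ π' s₀ (T + 1)) (fun H => costSum c 0 H.1)
      = ∑ t ∈ Finset.range (T + 1),
          pmfExp (histLaw P ρ π s₀ t) (stepRegret P ρ c π π' T t) := by
  classical
  have hzero : ∀ (σ : ℕ → Hist S A → PMF A),
      pmfExp (histLaw P ρ σ s₀ (T + 1)) (fun H => costSum c 0 H.1)
      = pmfExp (histLaw P ρ σ s₀ (T + 1))
          (fun H => costSum c 0 H.1 + futureW P ρ c π' (T + 1 - (T + 1)) H) := by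
    intro σ
    refine RegretAux.pmfExp_congr _ fun H _ => ?_
    rw [show T + 1 - (T + 1) = 0 from by omega,
      show futureW P ρ c π' 0 H = 0 from rfl, add_zero]
  have hπ := RegretAux.telescope P ρ c π' π s₀ T (T + 1) le_rfl
  have hπ' := RegretAux.telescope P ρ c π' π' s₀ T (T + 1) le_rfl
  have hreg0 : ∀ t, pmfExp (histLaw P ρ π' s₀ t) (stepRegret P ρ c π' π' T t) = 0 := by
    intro t
    have : stepRegret P ρ c π' π' T t = fun _ => 0 := by
      funext H
      rw [RegretAux.stepRegret_eq, sub_self]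
    rw [this]
    simpa using RegretAux.pmfExp_const (histLaw P ρ π' s₀ t) 0
  rw [hzero π, hzero π', hπ, hπ']
  simp only [hreg0, Finset.sum_const_zero]
  ring
end
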